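/- Let P, Q ∈ ℂ^{n×n} be Hermitian positive definite, and let S, R ∈ ℂ^{n×n} be invertible with P = S*S and Q = R*R. Let S R* = U Σ V* be a singular value decomposition with U, V ∈ ℂ^{n×n} unitary and Σ diagonal with strictly positive real diagonal entries, and set T = Σ^{-1/2} V* R. Then T is invertible with T⁻¹ = S* U Σ^{-1/2}, and T P T* = Σ = (T⁻¹)* Q T⁻¹; i.e. T is a balancing transformation making both Gramians equal to the diagonal matrix Σ of Hankel singular values. -/

import Mathlib

open Matrix ComplexOrder

/-- Construction of a balancing transformation: if `P = S*S` and `Q = R*R`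
are Hermitian positive definite Gramians with `S`, `R` invertible, and
`S R* = U Σ V*` is a singular value decomposition (`U`, `V` unitary, `Σ`
diagonal with strictly positive real entries `σ i`), then
`T = Σ^{-1/2} V* R` is invertible with `T⁻¹ = S* U Σ^{-1/2}`, and
`T P T* = Σ = (T⁻¹)* Q T⁻¹`. -/
theorem balancing_transformation {n : ℕ}
    (P Q S R U V : Matrix (Fin n) (Fin n) ℂ)
    (hP : P.PosDef) (hQ : Q.PosDef)
    (hS : IsUnit S) (hR : IsUnit R)
    (hPS : P = Sᴴ * S) (hQR : Q = Rᴴ * R)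
    (hU : U ∈ Matrix.unitaryGroup (Fin n) ℂ)
    (hV : V ∈ Matrix.unitaryGroup (Fin n) ℂ)
    (σ : Fin n → ℝ) (hσ : ∀ i, 0 < σ i)
    (hSVD : S * Rᴴ = U * Matrix.diagonal (fun i => (σ i : ℂ)) * Vᴴ) :
    IsUnit (Matrix.diagonal (fun i => ((Real.sqrt (σ i))⁻¹ : ℂ)) * Vᴴ * R) ∧
    (Matrix.diagonal (fun i => ((Real.sqrt (σ i))⁻¹ : ℂ)) * Vᴴ * R)⁻¹ =
      Sᴴ * U * Matrix.diagonal (fun i => ((Real.sqrt (σ i))⁻¹ : ℂ)) ∧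
    (Matrix.diagonal (fun i => ((Real.sqrt (σ i))⁻¹ : ℂ)) * Vᴴ * R) * P *
        (Matrix.diagonal (fun i => ((Real.sqrt (σ i))⁻¹ : ℂ)) * Vᴴ * R)ᴴ =
      Matrix.diagonal (fun i => (σ i : ℂ)) ∧
    ((Matrix.diagonal (fun i => ((Real.sqrt (σ i))⁻¹ : ℂ)) * Vᴴ * R)⁻¹)ᴴ * Q *
        (Matrix.diagonal (fun i => ((Real.sqrt (σ i))⁻¹ : ℂ)) * Vᴴ * R)⁻¹ =
      Matrix.diagonal (fun i => (σ i : ℂ)) := by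
  set D : Matrix (Fin n) (Fin n) ℂ :=
    Matrix.diagonal (fun i => ((Real.sqrt (σ i))⁻¹ : ℂ)) with hD
  set Sg : Matrix (Fin n) (Fin n) ℂ :=
    Matrix.diagonal (fun i => (σ i : ℂ)) with hSg
  have hsq : ∀ i, ((Real.sqrt (σ i) : ℂ)) * (Real.sqrt (σ i) : ℂ) = (σ i : ℂ) := by
    intro i
    rw [← Complex.ofReal_mul, Real.mul_self_sqrt (hσ i).le]
  have hsne : ∀ i, (Real.sqrt (σ i) : ℂ) ≠ 0 := by
    intro i
    exact_mod_cast Real.sqrt_ne_zero'.2 (hσ i)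
  have key1 : (fun i => ((Real.sqrt (σ i) : ℂ))⁻¹ * (σ i : ℂ) * ((Real.sqrt (σ i) : ℂ))⁻¹)
      = fun _ => (1 : ℂ) := by
    funext i
    rw [← hsq i]
    field_simp
    exact div_self (hsne i)
  have key2 : (fun i => ((Real.sqrt (σ i) : ℂ))⁻¹ * ((σ i : ℂ) * (σ i : ℂ)) *
      ((Real.sqrt (σ i) : ℂ))⁻¹) = fun i => (σ i : ℂ) := by
    funext i
    rw [← hsq i]
    field_simp
  have hDSD : D * Sg * D = 1 := by
    rw [hD, hSg, Matrix.diagonal_mul_diagonal, Matrix.diagonal_mul_diagonal, key1]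
    simp
  have hDSSD : D * (Sg * Sg) * D = Sg := by
    rw [hD, hSg, Matrix.diagonal_mul_diagonal, Matrix.diagonal_mul_diagonal,
      Matrix.diagonal_mul_diagonal, key2]
  have hDstar : (star fun i => ((Real.sqrt (σ i))⁻¹ : ℂ))
      = fun i => ((Real.sqrt (σ i))⁻¹ : ℂ) := by
    funext i
    simp [Complex.conj_ofReal]
  have hSgstar : (star fun i => ((σ i : ℂ)))
      = fun i => ((σ i : ℂ)) := by
    funext i
    simp [Complex.conj_ofReal]
  have hDH : Dᴴ = D := by
    rw [hD, Matrix.diagonal_conjTranspose, hDstar]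
  have hSgH : Sgᴴ = Sg := by
    rw [hSg, Matrix.diagonal_conjTranspose, hSgstar]
  have hRS : R * Sᴴ = V * Sg * Uᴴ := by
    have := congrArg conjTranspose hSVD
    simpa [Matrix.conjTranspose_mul, hSgH, Matrix.mul_assoc] using this
  have hV1 : Vᴴ * V = 1 := hV.1
  have hU1 : Uᴴ * U = 1 := hU.1
  have hVc : ∀ X : Matrix (Fin n) (Fin n) ℂ, Vᴴ * (V * X) = X := by
    intro X; rw [← Matrix.mul_assoc, hV1, Matrix.one_mul]
  have hUc : ∀ X : Matrix (Fin n) (Fin n) ℂ, Uᴴ * (U * X) = X := by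
    intro X; rw [← Matrix.mul_assoc, hU1, Matrix.one_mul]
  have hRS' : ∀ X : Matrix (Fin n) (Fin n) ℂ, R * (Sᴴ * X) = V * (Sg * (Uᴴ * X)) := by
    intro X
    calc R * (Sᴴ * X) = (R * Sᴴ) * X := by rw [Matrix.mul_assoc]
    _ = V * (Sg * (Uᴴ * X)) := by rw [hRS]; simp [Matrix.mul_assoc]
  have hSR' : ∀ X : Matrix (Fin n) (Fin n) ℂ, S * (Rᴴ * X) = U * (Sg * (Vᴴ * X)) := by
    intro X
    calc S * (Rᴴ * X) = (S * Rᴴ) * X := by rw [Matrix.mul_assoc]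
    _ = U * (Sg * (Vᴴ * X)) := by rw [hSVD]; simp [Matrix.mul_assoc]
  -- T * M = 1
  have hTM : (D * Vᴴ * R) * (Sᴴ * U * D) = 1 := by
    calc (D * Vᴴ * R) * (Sᴴ * U * D)
        = D * (Vᴴ * (R * (Sᴴ * (U * D)))) := by simp [Matrix.mul_assoc]
      _ = D * (Vᴴ * (V * (Sg * (Uᴴ * (U * D))))) := by rw [hRS' (U * D)]
      _ = D * (Sg * D) := by rw [hVc, hUc]
      _ = 1 := by
          simp only [← Matrix.mul_assoc]
          exact hDSD
  have hUnit : IsUnit (D * Vᴴ * R) := by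
    rw [Matrix.isUnit_iff_isUnit_det]
    have : (D * Vᴴ * R).det * (Sᴴ * U * D).det = 1 := by
      rw [← Matrix.det_mul, hTM, Matrix.det_one]
    exact IsUnit.of_mul_eq_one _ this
  have hInv : (D * Vᴴ * R)⁻¹ = Sᴴ * U * D := Matrix.inv_eq_right_inv hTM
  refine ⟨hUnit, hInv, ?_, ?_⟩
  · -- T P Tᴴ = Σ
    calc (D * Vᴴ * R) * P * (D * Vᴴ * R)ᴴ
        = D * (Vᴴ * (R * (Sᴴ * (S * (Rᴴ * (V * D)))))) := by
          rw [hPS]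
          simp [Matrix.conjTranspose_mul, hDH, Matrix.mul_assoc]
      _ = D * (Vᴴ * (V * (Sg * (Uᴴ * (U * (Sg * (Vᴴ * (V * D)))))))) := by
          rw [hSR' (V * D), hRS' _]
      _ = D * (Sg * (Sg * D)) := by rw [hVc, hUc, hVc]
      _ = Sg := by
          simp only [← Matrix.mul_assoc]
          rw [Matrix.mul_assoc D Sg Sg, hDSSD]
  · -- (T⁻¹)ᴴ Q T⁻¹ = Σ
    rw [hInv, hQR]
    calc (Sᴴ * U * D)ᴴ * (Rᴴ * R) * (Sᴴ * U * D)
        = D * (Uᴴ * (S * (Rᴴ * (R * (Sᴴ * (U * D)))))) := by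
          simp [Matrix.conjTranspose_mul, hDH, Matrix.mul_assoc]
      _ = D * (Uᴴ * (U * (Sg * (Vᴴ * (V * (Sg * (Uᴴ * (U * D)))))))) := by
          rw [hRS' (U * D), hSR']
      _ = D * (Sg * (Sg * D)) := by rw [hUc, hVc, hUc]
      _ = Sg := by
          simp only [← Matrix.mul_assoc]
          rw [Matrix.mul_assoc D Sg Sg, hDSSD]
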